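/- If a graph G has a shadow-complete layering (V_0, V_1, ..., V_n), then π(G) ≤ 4 · max_i π(G[V_i]), where π is the nonrepetitive chromatic number. -/

import Mathlib

/-- `v 0, …, v (n-1)` is a path in `G`. -/
def IsPathSeq {V : Type*} (G : SimpleGraph V) (n : ℕ) (v : ℕ → V) : Prop :=
  (∀ i, i + 1 < n → G.Adj (v i) (v (i + 1))) ∧
  (∀ i j, i < n → j < n → v i = v j → i = j)

/-- A nonrepetitive colouring of `G`. -/
def NonrepetitiveColoring {V C : Type*} (G : SimpleGraph V) (φ : V → C) : Prop :=
  ∀ t : ℕ, 0 < t → ∀ v : ℕ → V, IsPathSeq G (2 * t) v →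
    ∃ i < t, φ (v i) ≠ φ (v (t + i))

/-- A colouring that is nonrepetitive on the subgraph of `G` induced by `S`. -/
def NonrepetitiveOn {V C : Type*} (G : SimpleGraph V) (S : Set V) (φ : V → C) : Prop :=
  ∀ t : ℕ, 0 < t → ∀ v : ℕ → V, (∀ i < 2 * t, v i ∈ S) → IsPathSeq G (2 * t) v →
    ∃ i < t, φ (v i) ≠ φ (v (t + i))

/-- `L` is a layering of `G`: endpoints of each edge are in the same or
consecutive layers. -/
def IsLayering {V : Type*} (G : SimpleGraph V) (L : V → ℕ) : Prop :=
  ∀ u w : V, G.Adj u w → L u ≤ L w + 1 ∧ L w ≤ L u + 1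

/-- A layering is shadow-complete if for each `i ≥ 1`, the shadow (the set of
vertices of layer `i-1` adjacent to a fixed connected component of the subgraph
induced by layers `≥ i`) is a clique. -/
def ShadowComplete {V : Type*} (G : SimpleGraph V) (L : V → ℕ) : Prop :=
  ∀ i : ℕ, 1 ≤ i → ∀ (u w x y : V) (hu : i ≤ L u) (hw : i ≤ L w),
    L x = i - 1 → L y = i - 1 → G.Adj x u → G.Adj y w →
    (G.induce {z : V | i ≤ L z}).Reachable ⟨u, hu⟩ ⟨w, hw⟩ →
    x ≠ y → G.Adj x y

section AuxNonrepetitive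

def abit (x : ℕ) : ℕ := x % 2
def bbit (x : ℕ) : ℕ := (x % 2 + x / 2) % 2

def gfun (X r : ℕ) : ℕ :=
  if r = 0 then X % 2 else if r = 1 then 1 - X % 2
  else if r = 2 then 2 + bbit X else 3 - bbit X

def wrd : ℕ → ℕ
  | 0 => 0
  | (n+1) => gfun (wrd ((n+1)/4)) ((n+1)%4)
  decreasing_by exact Nat.div_lt_self (Nat.succ_pos n) (by norm_num)

lemma wrd_eq (n : ℕ) : wrd n = gfun (wrd (n/4)) (n%4) := by
  cases n with
  | zero => simp [wrd, gfun, abit]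
  | succ n => rw [wrd]

lemma abit_le (x : ℕ) : abit x ≤ 1 := by unfold abit; omega
lemma bbit_le (x : ℕ) : bbit x ≤ 1 := by unfold bbit; omega

lemma wrd0 (k : ℕ) : wrd (4*k) = abit (wrd k) := by
  rw [wrd_eq (4*k)]
  have h1 : 4*k/4 = k := by omega
  have h2 : 4*k%4 = 0 := by omega
  rw [h1, h2]; simp [gfun, abit]

lemma wrd1 (k : ℕ) : wrd (4*k+1) = 1 - abit (wrd k) := by
  rw [wrd_eq (4*k+1)]
  have h1 : (4*k+1)/4 = k := by omega
  have h2 : (4*k+1)%4 = 1 := by omega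
  rw [h1, h2]; simp [gfun, abit]

lemma wrd2 (k : ℕ) : wrd (4*k+2) = 2 + bbit (wrd k) := by
  rw [wrd_eq (4*k+2)]
  have h1 : (4*k+2)/4 = k := by omega
  have h2 : (4*k+2)%4 = 2 := by omega
  rw [h1, h2]; simp [gfun]

lemma wrd3 (k : ℕ) : wrd (4*k+3) = 3 - bbit (wrd k) := by
  rw [wrd_eq (4*k+3)]
  have h1 : (4*k+3)/4 = k := by omega
  have h2 : (4*k+3)%4 = 3 := by omega
  rw [h1, h2]; simp [gfun]

lemma wrd_lt (n : ℕ) : wrd n < 4 := by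
  rw [wrd_eq n]
  unfold gfun
  have := abit_le (wrd (n/4))
  have := bbit_le (wrd (n/4))
  unfold abit at *
  split <;> try omega
  split <;> try omega
  split <;> omega

lemma wrd_div2 (n : ℕ) : wrd n / 2 = n / 2 % 2 := by
  have hn : n = 4*(n/4) + n%4 := by omega
  set k := n/4 with hk
  have ha := abit_le (wrd k); have hb := bbit_le (wrd k)
  have h4 : n % 4 = 0 ∨ n%4 = 1 ∨ n%4 = 2 ∨ n%4 = 3 := by omega
  rcases h4 with h|h|h|h <;> rw [hn, h]
  · rw [show 4*k+0 = 4*k by ring, wrd0]; omega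
  · rw [wrd1]; omega
  · rw [wrd2]; omega
  · rw [wrd3]; omega

def wA (n : ℕ) : ℕ := abit (wrd n)
def wB (n : ℕ) : ℕ := bbit (wrd n)

lemma wA_le (n : ℕ) : wA n ≤ 1 := abit_le _
lemma wB_le (n : ℕ) : wB n ≤ 1 := bbit_le _

lemma abit_small (x : ℕ) (h : x ≤ 1) : abit x = x := by unfold abit; omega
lemma bbit_small (x : ℕ) (h : x ≤ 1) : bbit x = x := by unfold bbit; omega

-- the eight bit-transfer lemmas
lemma wA0 (k : ℕ) : wA (4*k) = wA k := by
  unfold wA; rw [wrd0, abit_small _ (abit_le _)]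
lemma wA1 (k : ℕ) : wA (4*k+1) = 1 - wA k := by
  unfold wA; rw [wrd1]; have := abit_le (wrd k); unfold abit at *; omega
lemma wA2 (k : ℕ) : wA (4*k+2) = wB k := by
  unfold wA wB; rw [wrd2]; have := bbit_le (wrd k); unfold abit bbit at *; omega
lemma wA3 (k : ℕ) : wA (4*k+3) = 1 - wB k := by
  unfold wA wB; rw [wrd3]; have := bbit_le (wrd k); unfold abit bbit at *; omega
lemma wB0 (k : ℕ) : wB (4*k) = wA k := by
  unfold wA wB; rw [wrd0]; have := abit_le (wrd k); unfold abit bbit at *; omega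
lemma wB1 (k : ℕ) : wB (4*k+1) = 1 - wA k := by
  unfold wA wB; rw [wrd1]; have := abit_le (wrd k); unfold abit bbit at *; omega
lemma wB2 (k : ℕ) : wB (4*k+2) = 1 - wB k := by
  unfold wB; rw [wrd2]; have := bbit_le (wrd k); unfold bbit at *; omega
lemma wB3 (k : ℕ) : wB (4*k+3) = wB k := by
  unfold wB; rw [wrd3]; have := bbit_le (wrd k); unfold bbit at *; omega

lemma wrd_eq_of_bits {p q : ℕ} (ha : wA p = wA q) (hb : wB p = wB q) :
    wrd p = wrd q := by
  have hp := wrd_lt p; have hq := wrd_lt q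
  unfold wA abit at ha; unfold wB bbit at hb; omega

lemma bits_of_wrd_eq {p q : ℕ} (h : wrd p = wrd q) : wA p = wA q ∧ wB p = wB q :=
  ⟨by unfold wA; rw [h], by unfold wB; rw [h]⟩

-- N1
lemma wrd_ne_two (n : ℕ) : wrd n ≠ wrd (n+2) := by
  intro h
  have h1 := wrd_div2 n; have h2 := wrd_div2 (n+2)
  rw [h] at h1; omega

lemma wrd_ne_succ (n : ℕ) : wrd n ≠ wrd (n+1) := by
  intro h
  have hd1 := wrd_div2 n; have hd2 := wrd_div2 (n+1)
  rw [h] at hd1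
  -- classes equal forces n % 4 = 0 or 2
  have hn : n = 4*(n/4) + n%4 := by omega
  set k := n/4 with hk
  have ha := abit_le (wrd k); have hb := bbit_le (wrd k)
  have h4 : n % 4 = 0 ∨ n%4 = 1 ∨ n%4 = 2 ∨ n%4 = 3 := by omega
  rcases h4 with h0|h0|h0|h0
  · rw [hn, h0] at h
    rw [show 4*k+0+1 = 4*k+1 by ring, wrd1] at h
    rw [show 4*k+0 = 4*k by ring, wrd0] at h
    unfold abit at h; omega
  · omega
  · rw [hn, h0] at h
    rw [show 4*k+2+1 = 4*k+3 by ring, wrd3, wrd2] at h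
    omega
  · omega

def Sq (m k : ℕ) : Prop := ∀ j, j < m → wrd (k+j) = wrd (k+j+m)
def Tp (m k : ℕ) : Prop :=
  wB k = wB (k+m) ∧ (∀ j, 0 < j → j < m → wrd (k+j) = wrd (k+j+m)) ∧
  wA (k+m) = wA (k+2*m)

lemma tA0 {p q : ℕ} (h : wrd (4*p) = wrd (4*q)) : wA p = wA q := by
  have := (bits_of_wrd_eq h).1; rwa [wA0, wA0] at this
lemma tA1 {p q : ℕ} (h : wrd (4*p+1) = wrd (4*q+1)) : wA p = wA q := by
  have h2 := (bits_of_wrd_eq h).1; rw [wA1, wA1] at h2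
  have := wA_le p; have := wA_le q; omega
lemma tB2 {p q : ℕ} (h : wrd (4*p+2) = wrd (4*q+2)) : wB p = wB q := by
  have h2 := (bits_of_wrd_eq h).2; rw [wB2, wB2] at h2
  have := wB_le p; have := wB_le q; omega
lemma tB3 {p q : ℕ} (h : wrd (4*p+3) = wrd (4*q+3)) : wB p = wB q := by
  have := (bits_of_wrd_eq h).2; rwa [wB3, wB3] at this

lemma kill2 {m x : ℕ} (hm : m % 4 = 2) : wrd x ≠ wrd (x+m) := by
  intro h; have h1 := wrd_div2 x; have h2 := wrd_div2 (x+m)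
  rw [h] at h1; omega

lemma kill_odd {m x : ℕ} (hm : m % 2 = 1) (h1 : wrd x = wrd (x+m))
    (h2 : wrd (x+1) = wrd (x+1+m)) : False := by
  have a1 := wrd_div2 x; have a2 := wrd_div2 (x+m)
  have a3 := wrd_div2 (x+1); have a4 := wrd_div2 (x+1+m)
  rw [h1] at a1; rw [h2] at a3; omega

lemma noTp1 (k : ℕ) : ¬ Tp 1 k := by
  rintro ⟨h1, _, h3⟩
  have h4 : k%4 = 0 ∨ k%4 = 1 ∨ k%4 = 2 ∨ k%4 = 3 := by omega
  rcases h4 with h0|h0|h0|h0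
  · obtain ⟨K, rfl⟩ : ∃ K, k = 4*K := ⟨k/4, by omega⟩
    rw [show 4*K+1 = 4*K+1 by ring, wB0, wB1] at h1
    have := wA_le K; omega
  · obtain ⟨K, rfl⟩ : ∃ K, k = 4*K+1 := ⟨k/4, by omega⟩
    rw [show 4*K+1+1 = 4*K+2 by ring, show 4*K+1+2*1 = 4*K+3 by ring, wA2, wA3] at h3
    have := wB_le K; omega
  · obtain ⟨K, rfl⟩ : ∃ K, k = 4*K+2 := ⟨k/4, by omega⟩
    rw [show 4*K+2+1 = 4*K+3 by ring, wB2, wB3] at h1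
    have := wB_le K; omega
  · obtain ⟨K, rfl⟩ : ∃ K, k = 4*K+3 := ⟨k/4, by omega⟩
    rw [show 4*K+3+1 = 4*(K+1) by ring, show 4*K+3+2*1 = 4*(K+1)+1 by ring,
      wA0, wA1] at h3
    have := wA_le (K+1); omega

theorem noSqTp : ∀ m, 1 ≤ m → ∀ k, ¬ Sq m k ∧ ¬ Tp m k := by
  intro m
  induction m using Nat.strong_induction_on with
  | _ m ih =>
    intro hm k
    by_cases hm4 : m % 4 = 0
    · -- inductive case m = 4 m'
      obtain ⟨m', rfl⟩ : ∃ m', m = 4*m' := ⟨m/4, by omega⟩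
      have hm' : 1 ≤ m' := by omega
      have ihm := ih m' (by omega) hm'
      obtain ⟨K, r, hr, rfl⟩ : ∃ K r, r < 4 ∧ k = 4*K + r :=
        ⟨k/4, k%4, by omega, by omega⟩
      constructor
      · intro hS
        interval_cases r
        · refine (ihm K).1 (fun i hi => wrd_eq_of_bits ?_ ?_)
          · have h := hS (4*i) (by omega)
            rw [show 4*K+0+4*i = 4*(K+i) by ring,
              show 4*(K+i)+4*m' = 4*(K+i+m') by ring] at h
            exact tA0 h
          · have h := hS (4*i+2) (by omega)
            rw [show 4*K+0+(4*i+2) = 4*(K+i)+2 by ring,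
              show 4*(K+i)+2+4*m' = 4*(K+i+m')+2 by ring] at h
            exact tB2 h
        · refine (ihm K).1 (fun i hi => wrd_eq_of_bits ?_ ?_)
          · have h := hS (4*i) (by omega)
            rw [show 4*K+1+4*i = 4*(K+i)+1 by ring,
              show 4*(K+i)+1+4*m' = 4*(K+i+m')+1 by ring] at h
            exact tA1 h
          · have h := hS (4*i+1) (by omega)
            rw [show 4*K+1+(4*i+1) = 4*(K+i)+2 by ring,
              show 4*(K+i)+2+4*m' = 4*(K+i+m')+2 by ring] at h
            exact tB2 h
        · refine (ihm K).2 ⟨?_, fun j hj0 hjm => wrd_eq_of_bits ?_ ?_, ?_⟩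
          · have h := hS 0 (by omega)
            rw [show 4*K+2+0 = 4*K+2 by ring,
              show 4*K+2+4*m' = 4*(K+m')+2 by ring] at h
            exact tB2 h
          · have h := hS (4*(j-1)+2) (by omega)
            rw [show 4*K+2+(4*(j-1)+2) = 4*(K+j) by omega,
              show 4*(K+j)+4*m' = 4*(K+j+m') by ring] at h
            exact tA0 h
          · have h := hS (4*j) (by omega)
            rw [show 4*K+2+4*j = 4*(K+j)+2 by ring,
              show 4*(K+j)+2+4*m' = 4*(K+j+m')+2 by ring] at h
            exact tB2 h
          · have h := hS (4*(m'-1)+2) (by omega)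
            rw [show 4*K+2+(4*(m'-1)+2) = 4*(K+m') by omega,
              show 4*(K+m')+4*m' = 4*(K+2*m') by ring] at h
            exact tA0 h
        · refine (ihm (K+1)).1 (fun i hi => wrd_eq_of_bits ?_ ?_)
          · have h := hS (4*i+1) (by omega)
            rw [show 4*K+3+(4*i+1) = 4*(K+1+i) by ring,
              show 4*(K+1+i)+4*m' = 4*(K+1+i+m') by ring] at h
            exact tA0 h
          · have h := hS (4*i+3) (by omega)
            rw [show 4*K+3+(4*i+3) = 4*(K+1+i)+2 by ring,
              show 4*(K+1+i)+2+4*m' = 4*(K+1+i+m')+2 by ring] at h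
            exact tB2 h
      · rintro ⟨hC1, hC2, hC3⟩
        interval_cases r
        · refine (ihm K).1 (fun i hi => wrd_eq_of_bits ?_ ?_)
          · have h := hC2 (4*i+1) (by omega) (by omega)
            rw [show 4*K+0+(4*i+1) = 4*(K+i)+1 by ring,
              show 4*(K+i)+1+4*m' = 4*(K+i+m')+1 by ring] at h
            exact tA1 h
          · have h := hC2 (4*i+2) (by omega) (by omega)
            rw [show 4*K+0+(4*i+2) = 4*(K+i)+2 by ring,
              show 4*(K+i)+2+4*m' = 4*(K+i+m')+2 by ring] at h
            exact tB2 h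
        · refine (ihm K).1 (fun i hi => wrd_eq_of_bits ?_ ?_)
          · rcases Nat.eq_zero_or_pos i with rfl | hip
            · rw [show 4*K+1+4*m' = 4*(K+m')+1 by ring, wB1, wB1] at hC1
              have e1 := wA_le K; have e2 := wA_le (K+m')
              have h2 : wA K = wA (K+m') := by omega
              simpa using h2
            · have h := hC2 (4*(i-1)+3) (by omega) (by omega)
              rw [show 4*K+1+(4*(i-1)+3) = 4*(K+i) by omega,
                show 4*(K+i)+4*m' = 4*(K+i+m') by ring] at h
              exact tA0 h
          · have h := hC2 (4*i+1) (by omega) (by omega)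
            rw [show 4*K+1+(4*i+1) = 4*(K+i)+2 by ring,
              show 4*(K+i)+2+4*m' = 4*(K+i+m')+2 by ring] at h
            exact tB2 h
        · refine (ihm K).2 ⟨?_, fun j hj0 hjm => wrd_eq_of_bits ?_ ?_, ?_⟩
          · rw [show 4*K+2+4*m' = 4*(K+m')+2 by ring, wB2, wB2] at hC1
            have := wB_le K; have := wB_le (K+m'); omega
          · have h := hC2 (4*(j-1)+2) (by omega) (by omega)
            rw [show 4*K+2+(4*(j-1)+2) = 4*(K+j) by omega,
              show 4*(K+j)+4*m' = 4*(K+j+m') by ring] at h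
            exact tA0 h
          · have h := hC2 (4*j) (by omega) (by omega)
            rw [show 4*K+2+4*j = 4*(K+j)+2 by ring,
              show 4*(K+j)+2+4*m' = 4*(K+j+m')+2 by ring] at h
            exact tB2 h
          · have h := hC2 (4*(m'-1)+2) (by omega) (by omega)
            rw [show 4*K+2+(4*(m'-1)+2) = 4*(K+m') by omega,
              show 4*(K+m')+4*m' = 4*(K+2*m') by ring] at h
            exact tA0 h
        · refine (ihm (K+1)).1 (fun i hi => wrd_eq_of_bits ?_ ?_)
          · have h := hC2 (4*i+1) (by omega) (by omega)
            rw [show 4*K+3+(4*i+1) = 4*(K+1+i) by ring,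
              show 4*(K+1+i)+4*m' = 4*(K+1+i+m') by ring] at h
            exact tA0 h
          · have h := hC2 (4*i+3) (by omega) (by omega)
            rw [show 4*K+3+(4*i+3) = 4*(K+1+i)+2 by ring,
              show 4*(K+1+i)+2+4*m' = 4*(K+1+i+m')+2 by ring] at h
            exact tB2 h
    · -- base cases : m % 4 ∈ {1,2,3}
      constructor
      · intro hS
        by_cases h2 : m % 4 = 2
        · exact kill2 h2 (by have := hS 0 (by omega); simpa using this)
        · -- m odd
          have hodd : m % 2 = 1 := by omega
          rcases Nat.lt_or_ge m 2 with hm1 | hm2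
          · -- m = 1
            have : m = 1 := by omega
            subst this
            have h := hS 0 (by omega)
            rw [show k+0 = k by ring] at h
            exact wrd_ne_succ k h
          · have ha := hS 0 (by omega)
            have hb := hS 1 (by omega)
            rw [show k+0 = k by ring] at ha
            exact kill_odd hodd ha hb
      · intro hT
        by_cases h2 : m % 4 = 2
        · rcases Nat.lt_or_ge m 3 with hm2 | hm3
          · -- m = 2
            have : m = 2 := by omega
            subst this
            have h := hT.2.1 1 (by omega) (by omega)
            rw [show k+1+2 = (k+1)+2 by ring] at h
            exact wrd_ne_two (k+1) h
          · have h := hT.2.1 1 (by omega) (by omega)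
            exact kill2 h2 (x := k+1) h
        · have hodd : m % 2 = 1 := by omega
          rcases Nat.lt_or_ge m 2 with hm1 | hm2
          · have : m = 1 := by omega
            subst this
            exact noTp1 k hT
          · have hm3 : 3 ≤ m := by omega
            have ha := hT.2.1 1 (by omega) (by omega)
            have hb := hT.2.1 2 (by omega) (by omega)
            rw [show k+2 = (k+1)+1 by ring, show (k+1)+1+m = (k+1)+1+m by ring] at hb
            exact kill_odd hodd ha hb

lemma wrd_far {x y : ℕ} (h : wrd x = wrd y) (hne : x ≠ y) :
    x + 3 ≤ y ∨ y + 3 ≤ x := by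
  by_contra hc
  push_neg at hc
  rcases Nat.lt_or_ge x y with hlt | hge
  · have : y = x+1 ∨ y = x+2 := by omega
    rcases this with rfl|rfl
    · exact wrd_ne_succ x h
    · exact wrd_ne_two x h
  · have : x = y+1 ∨ x = y+2 ∨ x = y := by omega
    rcases this with rfl|rfl|rfl
    · exact wrd_ne_succ y h.symm
    · exact wrd_ne_two y h.symm
    · exact hne rfl

lemma walk_ivt (f : ℕ → ℕ) (n : ℕ) (hstep : ∀ i, i < n → f (i+1) ≤ f i + 1)
    (x : ℕ) (h0 : f 0 ≤ x) (hn : x ≤ f n) : ∃ i ≤ n, f i = x := by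
  induction n with
  | zero => exact ⟨0, le_refl 0, by omega⟩
  | succ n ihn =>
    rcases le_or_gt x (f n) with hle | hgt
    · obtain ⟨i, hi, hfi⟩ := ihn (fun i hi => hstep i (by omega)) hle
      exact ⟨i, by omega, hfi⟩
    · have := hstep n (by omega)
      exact ⟨n+1, le_refl _, by omega⟩

lemma step_classify {a b a' b' : ℕ} (ha1 : a' ≤ a+1) (ha2 : a ≤ a'+1)
    (hb1 : b' ≤ b+1) (hb2 : b ≤ b'+1)
    (hab : wrd a = wrd b) (hab' : wrd a' = wrd b') (h3 : a+3 ≤ b) :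
    (a' = a ∧ b' = b) ∨ (a' = a+1 ∧ b' = b+1) ∨ (a'+1 = a ∧ b'+1 = b) ∨
    (a' = a+1 ∧ b'+1 = b) ∨ (a'+1 = a ∧ b' = b+1) := by
  have c1 : ¬(a' = a ∧ b' = b+1) := by
    rintro ⟨rfl, rfl⟩; rw [hab] at hab'; exact wrd_ne_succ b hab'
  have c2 : ¬(a' = a ∧ b'+1 = b) := by
    rintro ⟨rfl, h⟩
    apply wrd_ne_succ b'
    rw [← hab', hab, ← h]
  have c3 : ¬(a' = a+1 ∧ b' = b) := by
    rintro ⟨rfl, rfl⟩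
    apply wrd_ne_succ a
    rw [hab, ← hab']
  have c4 : ¬(a'+1 = a ∧ b' = b) := by
    rintro ⟨h, rfl⟩
    apply wrd_ne_succ a'
    rw [hab', ← hab, ← h]
  omega

/-- core contradiction for strictly separated matched walks -/
lemma wrd_core (t : ℕ) (ht : 0 < t) (ℓ : ℕ → ℕ)
    (hlazy : ∀ i, i+1 < 2*t → ℓ (i+1) ≤ ℓ i + 1 ∧ ℓ i ≤ ℓ (i+1) + 1)
    (hmatch : ∀ i, i < t → wrd (ℓ i) = wrd (ℓ (t+i)))
    (hpos : ∀ i, i < t → ℓ i + 3 ≤ ℓ (t+i)) : False := by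
  have ht0 : ℓ t = ℓ (t+0) := by norm_num
  have he3 : ℓ 0 + 3 ≤ ℓ t := by rw [ht0]; exact hpos 0 ht
  obtain ⟨e, he⟩ : ∃ e, ℓ t = ℓ 0 + e := ⟨ℓ t - ℓ 0, by omega⟩
  have he3' : 3 ≤ e := by omega
  -- wrap
  have hwrap : ℓ t ≤ ℓ (t-1) + 1 ∧ ℓ (t-1) ≤ ℓ t + 1 := by
    have h := hlazy (t-1) (by omega)
    rw [show t-1+1 = t by omega] at h
    exact ⟨h.1, h.2⟩
  rcases Nat.even_or_odd e with heven | hodd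
  · -- even case
    have h20 : e % 2 = 0 := by rcases heven with ⟨r, hr⟩; omega
    have hm0 := hmatch 0 ht
    rw [← ht0, he] at hm0
    have hg0 := wrd_div2 (ℓ 0)
    have hgt := wrd_div2 (ℓ 0 + e)
    rw [hm0] at hg0
    have h40 : e % 4 = 0 := by omega
    -- invariant: ℓ (t+i) = ℓ i + e
    have Inv : ∀ i, i < t → ℓ (t+i) = ℓ i + e := by
      intro i
      induction i with
      | zero => intro _; rw [← ht0, he]
      | succ i ihi =>
        intro hi1
        have hi : i < t := by omega
        have hprev := ihi hi
        have s1 := hlazy i (by omega)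
        have s2 := hlazy (t+i) (by omega)
        rw [show t+i+1 = t+(i+1) by omega] at s2
        have hcl := step_classify s1.1 s1.2 s2.1 s2.2
          (hmatch i hi) (hmatch (i+1) hi1) (hpos i hi)
        have g1 := wrd_div2 (ℓ (i+1))
        have g2 := wrd_div2 (ℓ (t+(i+1)))
        have gm := hmatch (i+1) hi1
        rw [gm] at g1
        omega
    -- square
    have hSq : Sq e (ℓ 0) := by
      intro j hj
      have hml : ℓ 0 + j ≤ ℓ (t-1) := by omega
      obtain ⟨i, hile, hieq⟩ := walk_ivt ℓ (t-1)
        (fun i hi => (hlazy i (by omega)).1) (ℓ 0 + j) (by omega) hml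
      have hit : i < t := by omega
      have := hmatch i hit
      rw [hieq, Inv i hit, hieq] at this
      exact this
    exact (noSqTp e (by omega) (ℓ 0)).1 hSq
  · -- odd case : mirror
    have h21 : e % 2 = 1 := by rcases hodd with ⟨r, hr⟩; omega
    have Inv : ∀ i, i < t → ℓ i + ℓ (t+i) = ℓ 0 + ℓ t := by
      intro i
      induction i with
      | zero => intro _; rw [← ht0]
      | succ i ihi =>
        intro hi1
        have hi : i < t := by omega
        have hprev := ihi hi
        have s1 := hlazy i (by omega)
        have s2 := hlazy (t+i) (by omega)
        rw [show t+i+1 = t+(i+1) by omega] at s2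
        have hcl := step_classify s1.1 s1.2 s2.1 s2.2
          (hmatch i hi) (hmatch (i+1) hi1) (hpos i hi)
        have g1 := wrd_div2 (ℓ (i+1))
        have g2 := wrd_div2 (ℓ (t+(i+1)))
        have gm := hmatch (i+1) hi1
        rw [gm] at g1
        have g3 := wrd_div2 (ℓ i)
        have g4 := wrd_div2 (ℓ (t+i))
        have gm2 := hmatch i hi
        rw [gm2] at g3
        have h3' := hpos (i+1) hi1
        have h3 := hpos i hi
        omega
    have hlast := Inv (t-1) (by omega)
    have h3l := hpos (t-1) (by omega)
    omega

theorem wrd_walk_boring (t : ℕ) (ht : 0 < t) (ℓ : ℕ → ℕ)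
    (hlazy : ∀ i, i+1 < 2*t → ℓ (i+1) ≤ ℓ i + 1 ∧ ℓ i ≤ ℓ (i+1) + 1)
    (hmatch : ∀ i, i < t → wrd (ℓ i) = wrd (ℓ (t+i))) :
    ∀ i, i < t → ℓ i = ℓ (t+i) := by
  by_contra hc
  push_neg at hc
  obtain ⟨i₀, hi₀, hne₀⟩ := hc
  have prop_up : ∀ i, i+1 < t → ℓ i = ℓ (t+i) → ℓ (i+1) = ℓ (t+(i+1)) := by
    intro i hi1 heq
    by_contra hnee
    have s1 := hlazy i (by omega)
    have s2 := hlazy (t+i) (by omega)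
    rw [show t+i+1 = t+(i+1) by omega] at s2
    rcases wrd_far (hmatch (i+1) (by omega)) hnee with h|h <;> omega
  have prop_dn : ∀ i, i+1 < t → ℓ (i+1) = ℓ (t+(i+1)) → ℓ i = ℓ (t+i) := by
    intro i hi1 heq
    by_contra hnee
    have s1 := hlazy i (by omega)
    have s2 := hlazy (t+i) (by omega)
    rw [show t+i+1 = t+(i+1) by omega] at s2
    rcases wrd_far (hmatch i (by omega)) hnee with h|h <;> omega
  have hne_all : ∀ i, i < t → ℓ i ≠ ℓ (t+i) := by
    intro j hj heqj
    apply hne₀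
    rcases le_or_gt j i₀ with hle | hlt
    · have key : ∀ d, j + d < t → ℓ (j+d) = ℓ (t+(j+d)) := by
        intro d
        induction d with
        | zero => intro _; simpa using heqj
        | succ d ihd =>
          intro hd
          have h := prop_up (j+d) (by omega) (ihd (by omega))
          rw [show j+(d+1) = j+d+1 by omega]
          exact h
      have := key (i₀ - j) (by omega)
      rw [show j + (i₀ - j) = i₀ by omega] at this
      exact this
    · have key : ∀ d, d ≤ j → ℓ (j-d) = ℓ (t+(j-d)) := by
        intro d
        induction d with
        | zero => intro _; simpa using heqj
        | succ d ihd =>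
          intro hd
          have h1 := ihd (by omega)
          rw [show j - d = (j - (d+1)) + 1 by omega] at h1
          exact prop_dn (j-(d+1)) (by omega) h1
      have := key (j - i₀) (by omega)
      rw [show j - (j - i₀) = i₀ by omega] at this
      exact this
  have hsep : ∀ i, i < t → ℓ i + 3 ≤ ℓ (t+i) ∨ ℓ (t+i) + 3 ≤ ℓ i :=
    fun i hi => wrd_far (hmatch i hi) (hne_all i hi)
  rcases hsep 0 ht with h0 | h0
  · have hpos : ∀ i, i < t → ℓ i + 3 ≤ ℓ (t+i) := by
      intro i
      induction i with
      | zero => intro _; exact h0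
      | succ i ihi =>
        intro hi1
        have hp := ihi (by omega)
        have s1 := hlazy i (by omega)
        have s2 := hlazy (t+i) (by omega)
        rw [show t+i+1 = t+(i+1) by omega] at s2
        rcases hsep (i+1) hi1 with h|h
        · exact h
        · omega
    exact wrd_core t ht ℓ hlazy hmatch hpos
  · have hneg : ∀ i, i < t → ℓ (t+i) + 3 ≤ ℓ i := by
      intro i
      induction i with
      | zero => intro _; exact h0
      | succ i ihi =>
        intro hi1
        have hp := ihi (by omega)
        have s1 := hlazy i (by omega)
        have s2 := hlazy (t+i) (by omega)
        rw [show t+i+1 = t+(i+1) by omega] at s2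
        rcases hsep (i+1) hi1 with h|h
        · omega
        · exact h
    set ℓ' : ℕ → ℕ := fun i => ℓ (2*t-1-i) with hℓ'
    have hlazy' : ∀ i, i+1 < 2*t → ℓ' (i+1) ≤ ℓ' i + 1 ∧ ℓ' i ≤ ℓ' (i+1) + 1 := by
      intro i hi
      have h := hlazy (2*t-2-i) (by omega)
      simp only [hℓ']
      rw [show 2*t-1-(i+1) = 2*t-2-i by omega, show 2*t-1-i = (2*t-2-i)+1 by omega]
      exact ⟨h.2, h.1⟩
    have hmatch' : ∀ i, i < t → wrd (ℓ' i) = wrd (ℓ' (t+i)) := by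
      intro i hi
      simp only [hℓ']
      rw [show 2*t-1-(t+i) = t-1-i by omega, show 2*t-1-i = t+(t-1-i) by omega]
      exact (hmatch (t-1-i) (by omega)).symm
    have hpos' : ∀ i, i < t → ℓ' i + 3 ≤ ℓ' (t+i) := by
      intro i hi
      simp only [hℓ']
      rw [show 2*t-1-(t+i) = t-1-i by omega, show 2*t-1-i = t+(t-1-i) by omega]
      exact hneg (t-1-i) (by omega)
    exact wrd_core t ht ℓ' hlazy' hmatch' hpos'

lemma reach_chain {V : Type*} (G : SimpleGraph V) (S : Set V) (v : ℕ → V) (a : ℕ) :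
    ∀ d (hmem : ∀ k, a ≤ k → k ≤ a+d → v k ∈ S)
      (hadj : ∀ k, a ≤ k → k < a+d → G.Adj (v k) (v (k+1))),
      (G.induce S).Reachable ⟨v a, hmem a le_rfl (by omega)⟩
        ⟨v (a+d), hmem (a+d) (by omega) le_rfl⟩ := by
  intro d
  induction d with
  | zero => intro hmem hadj; exact SimpleGraph.Reachable.refl _
  | succ d ihd =>
    intro hmem hadj
    have h1 := ihd (fun k h1 h2 => hmem k h1 (by omega))
      (fun k h1 h2 => hadj k h1 (by omega))
    refine h1.trans ?_
    have hadj' : (G.induce S).Adj ⟨v (a+d), hmem (a+d) (by omega) (by omega)⟩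
        ⟨v (a+d+1), hmem (a+d+1) (by omega) (by omega)⟩ := by
      simp only [SimpleGraph.induce, SimpleGraph.comap_adj, Function.Embedding.coe_subtype]
      exact hadj (a+d) (by omega) (by omega)
    exact hadj'.reachable

theorem shadowComplete_pi' {V : Type*} (G : SimpleGraph V) (L : V → ℕ)
    (hL : IsLayering G L) (hsc : ShadowComplete G L) (c : ℕ)
    (hlayers : ∀ i : ℕ, ∃ φ : V → Fin c, NonrepetitiveOn G {v : V | L v = i} φ) :
    ∃ φ : V → Fin (4 * c), NonrepetitiveColoring G φ := by
  choose Φ hΦ using hlayers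
  refine ⟨fun x => finProdFinEquiv (⟨wrd (L x), wrd_lt _⟩, Φ (L x) x), ?_⟩
  intro t ht v hpath
  by_contra hcon
  push_neg at hcon
  have hcomp : ∀ i, i < t → wrd (L (v i)) = wrd (L (v (t+i))) ∧
      Φ (L (v i)) (v i) = Φ (L (v (t+i))) (v (t+i)) := by
    intro i hi
    have h2 := finProdFinEquiv.injective (hcon i hi)
    refine ⟨?_, congrArg Prod.snd h2⟩
    exact congrArg Fin.val (congrArg Prod.fst h2)
  have hlazy : ∀ i, i+1 < 2*t → L (v (i+1)) ≤ L (v i) + 1 ∧ L (v i) ≤ L (v (i+1)) + 1 := by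
    intro i hi
    have := hL (v i) (v (i+1)) (hpath.1 i hi)
    exact ⟨this.2, this.1⟩
  have hboring : ∀ i, i < t → L (v i) = L (v (t+i)) :=
    wrd_walk_boring t ht (fun i => L (v i)) hlazy (fun i hi => (hcomp i hi).1)
  -- minimum layer
  have hne : ((Finset.range (2*t)).image (fun i => L (v i))).Nonempty :=
    ⟨L (v 0), Finset.mem_image_of_mem _ (Finset.mem_range.2 (by omega))⟩
  set M := ((Finset.range (2*t)).image (fun i => L (v i))).min' hne with hM
  have hMle : ∀ i, i < 2*t → M ≤ L (v i) := by
    intro i hi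
    exact Finset.min'_le _ _ (Finset.mem_image_of_mem _ (Finset.mem_range.2 hi))
  have hMmem : ∃ i, i < 2*t ∧ L (v i) = M := by
    have h := Finset.min'_mem _ hne
    rw [← hM] at h
    rw [Finset.mem_image] at h
    obtain ⟨i, hi, hieq⟩ := h
    exact ⟨i, Finset.mem_range.1 hi, hieq⟩
  -- enumeration of the first-half minimum positions
  set I₁ := (Finset.range t).filter (fun i => L (v i) = M) with hI₁
  have memI₁ : ∀ k, k ∈ I₁ ↔ (k < t ∧ L (v k) = M) := by
    intro k; rw [hI₁, Finset.mem_filter, Finset.mem_range]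
  have hI₁ne : I₁.Nonempty := by
    obtain ⟨i, hi, hieq⟩ := hMmem
    rcases Nat.lt_or_ge i t with h | h
    · exact ⟨i, (memI₁ i).2 ⟨h, hieq⟩⟩
    · refine ⟨i - t, (memI₁ (i-t)).2 ⟨by omega, ?_⟩⟩
      have hb := hboring (i-t) (by omega)
      rw [show t + (i-t) = i by omega] at hb
      rw [hb]; exact hieq
  set s := I₁.card with hs
  have hs0 : 0 < s := Finset.card_pos.2 hI₁ne
  set F : ℕ → ℕ := fun j => if h : j < s then (I₁.orderEmbOfFin rfl ⟨j, h⟩ : ℕ) else 0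
    with hF
  have Fmem : ∀ j, j < s → F j < t ∧ L (v (F j)) = M := by
    intro j h
    have : F j ∈ I₁ := by
      rw [hF]; simp only [dif_pos h]
      exact Finset.orderEmbOfFin_mem I₁ rfl ⟨j, h⟩
    exact (memI₁ _).1 this
  have Fmono : ∀ j j', j < j' → j' < s → F j < F j' := by
    intro j j' hjj hj'
    rw [hF]; simp only [dif_pos (show j < s by omega), dif_pos hj']
    exact (I₁.orderEmbOfFin rfl).lt_iff_lt.2 (Fin.mk_lt_mk.2 hjj)
  have Fsurj : ∀ k, k < t → L (v k) = M → ∃ j, j < s ∧ F j = k := by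
    intro k hk hkM
    have hmem : k ∈ Set.range (I₁.orderEmbOfFin (rfl : I₁.card = s)) := by
      rw [Finset.range_orderEmbOfFin]
      exact (memI₁ k).2 ⟨hk, hkM⟩
    obtain ⟨j, hj⟩ := hmem
    refine ⟨j, j.2, ?_⟩
    rw [hF]; simp only [dif_pos j.2]
    rw [← hj]
    exact dif_pos (show (j:ℕ) < s from j.2)
  -- the contracted index sequence
  set idx : ℕ → ℕ := fun j => if j < s then F j else t + F (j - s) with hidx
  have idx_lo : ∀ j, j < s → idx j = F j := by
    intro j h; rw [hidx]; simp [h]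
  have idx_hi : ∀ j, s ≤ j → idx j = t + F (j - s) := by
    intro j h; rw [hidx]; simp [show ¬ (j < s) by omega]
  have idx_lt : ∀ j, j < 2*s → idx j < 2*t := by
    intro j hj
    rcases Nat.lt_or_ge j s with h | h
    · rw [idx_lo j h]; have := (Fmem j h).1; omega
    · rw [idx_hi j h]; have := (Fmem (j-s) (by omega)).1; omega
  have layerM : ∀ j, j < 2*s → L (v (idx j)) = M := by
    intro j hj
    rcases Nat.lt_or_ge j s with h | h
    · rw [idx_lo j h]; exact (Fmem j h).2
    · rw [idx_hi j h]
      have hb := hboring (F (j-s)) (Fmem (j-s) (by omega)).1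
      rw [← hb]; exact (Fmem (j-s) (by omega)).2
  -- gap adjacency via shadow completeness
  have gap_adj : ∀ p q, p < q → q < 2*t → L (v p) = M → L (v q) = M →
      (∀ k, p < k → k < q → L (v k) ≠ M) → G.Adj (v p) (v q) := by
    intro p q hpq hq2t hp hq hint
    rcases Nat.lt_or_ge (p+1) q with hlt | hge
    · have hM1 : ∀ k, p < k → k < q → M + 1 ≤ L (v k) := by
        intro k h1 h2
        have h3 := hMle k (by omega)
        have h4 := hint k h1 h2
        omega
      obtain ⟨d, hd⟩ : ∃ d, q - 1 = p+1+d := ⟨q-1-(p+1), by omega⟩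
      have hreach0 := reach_chain G {z : V | M+1 ≤ L z} v (p+1) d
        (fun k h1 h2 => hM1 k (by omega) (by omega))
        (fun k h1 h2 => hpath.1 k (by omega))
      have hreach : (G.induce {z : V | M+1 ≤ L z}).Reachable
          ⟨v (p+1), hM1 (p+1) (by omega) (by omega)⟩
          ⟨v (q-1), hM1 (q-1) (by omega) (by omega)⟩ := by
        convert hreach0 using 2
        rw [hd]
      have hxy : v p ≠ v q := by
        intro he
        have := hpath.2 p q (by omega) (by omega) he
        omega
      have hadjx : G.Adj (v p) (v (p+1)) := hpath.1 p (by omega)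
      have hadjy : G.Adj (v q) (v (q-1)) := by
        have h := hpath.1 (q-1) (by omega)
        rw [show q-1+1 = q by omega] at h
        exact h.symm
      exact hsc (M+1) (by omega) (v (p+1)) (v (q-1)) (v p) (v q)
        (hM1 (p+1) (by omega) (by omega)) (hM1 (q-1) (by omega) (by omega))
        (by omega) (by omega) hadjx hadjy hreach hxy
    · have : q = p+1 := by omega
      subst this
      exact hpath.1 p (by omega)
  -- no minimum-layer index strictly between consecutive F-values
  have no_mid_base : ∀ k, k < t → L (v k) = M → ∀ j1, j1 + 1 < s →
      F j1 < k → k < F (j1+1) → False := by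
    intro k hk hkM j1 hj1 h1 h2
    obtain ⟨j', hj's, hj'⟩ := Fsurj k hk hkM
    rcases Nat.lt_trichotomy j' j1 with h | h | h
    · have := Fmono j' j1 h (by omega); omega
    · subst h; omega
    · rcases Nat.lt_trichotomy j' (j1+1) with g | g | g
      · omega
      · subst g; omega
      · have := Fmono (j1+1) j' g hj's; omega
  -- adjacency of the contracted sequence
  have hadj_u : ∀ j, j + 1 < 2*s → G.Adj (v (idx j)) (v (idx (j+1))) := by
    intro j hj
    rcases Nat.lt_or_ge (j+1) s with h | h
    · rw [idx_lo j (by omega), idx_lo (j+1) h]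
      apply gap_adj
      · exact Fmono j (j+1) (by omega) h
      · have := (Fmem (j+1) h).1; omega
      · exact (Fmem j (by omega)).2
      · exact (Fmem (j+1) h).2
      · intro k h1 h2 hkM
        have hkt : k < t := by have := (Fmem (j+1) h).1; omega
        exact no_mid_base k hkt hkM j (by omega) h1 h2
    · rcases Nat.lt_or_ge j s with h2 | h2
      · -- junction
        rw [idx_lo j h2, idx_hi (j+1) (by omega)]
        have hj1s : j + 1 - s = 0 := by omega
        rw [hj1s]
        apply gap_adj
        · have := (Fmem j h2).1; omega
        · have := (Fmem 0 hs0).1; omega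
        · exact (Fmem j h2).2
        · have hb := hboring (F 0) (Fmem 0 hs0).1
          rw [← hb]; exact (Fmem 0 hs0).2
        · intro k h1 h2' hkM
          rcases Nat.lt_or_ge k t with hkt | hkt
          · obtain ⟨j', hj's, hj'⟩ := Fsurj k hkt hkM
            rcases Nat.lt_or_ge j' (j+1) with g | g
            · rcases Nat.lt_trichotomy j' j with g2 | g2 | g2
              · have := Fmono j' j g2 h2; omega
              · subst g2; omega
              · omega
            · have := Fmono j j' (by omega) hj's
              have hle : F j' < t := (Fmem j' hj's).1
              omega
          · have hk't : k - t < t := by have := (Fmem 0 hs0).1; omega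
            have hbk := hboring (k-t) hk't
            rw [show t + (k-t) = k by omega] at hbk
            obtain ⟨j', hj's, hj'⟩ := Fsurj (k-t) hk't (by rw [hbk]; exact hkM)
            rcases Nat.eq_zero_or_pos j' with rfl | hj'0
            · omega
            · have := Fmono 0 j' hj'0 hj's; omega
      · -- second half
        rw [idx_hi j h2, idx_hi (j+1) (by omega)]
        have hj1 : j + 1 - s = (j - s) + 1 := by omega
        rw [hj1]
        have hd1 : j - s < s := by omega
        have hd2 : j - s + 1 < s := by omega
        apply gap_adj
        · have := Fmono (j-s) (j-s+1) (by omega) hd2; omega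
        · have := (Fmem (j-s+1) hd2).1; omega
        · have hb := hboring (F (j-s)) (Fmem (j-s) hd1).1
          rw [← hb]; exact (Fmem (j-s) hd1).2
        · have hb := hboring (F (j-s+1)) (Fmem (j-s+1) hd2).1
          rw [← hb]; exact (Fmem (j-s+1) hd2).2
        · intro k h1 h2' hkM
          have hkt : t ≤ k := by omega
          have hk't : k - t < t := by have := (Fmem (j-s+1) hd2).1; omega
          have hbk := hboring (k-t) hk't
          rw [show t + (k-t) = k by omega] at hbk
          refine no_mid_base (k-t) hk't (by rw [hbk]; exact hkM) (j-s) (by omega)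
            (by omega) (by omega)
  -- injectivity of idx
  have idx_inj : ∀ j j', j < 2*s → j' < 2*s → idx j = idx j' → j = j' := by
    intro j j' hj hj' heq
    have Finj : ∀ a a', a < s → a' < s → F a = F a' → a = a' := by
      intro a a' ha ha' hFe
      rcases Nat.lt_trichotomy a a' with h | h | h
      · have := Fmono a a' h ha'; omega
      · exact h
      · have := Fmono a' a h ha; omega
    rcases Nat.lt_or_ge j s with h | h <;> rcases Nat.lt_or_ge j' s with h' | h'
    · rw [idx_lo j h, idx_lo j' h'] at heq
      exact Finj j j' h h' heq
    · rw [idx_lo j h, idx_hi j' h'] at heq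
      have := (Fmem j h).1; omega
    · rw [idx_hi j h, idx_lo j' h'] at heq
      have := (Fmem j' h').1; omega
    · rw [idx_hi j h, idx_hi j' h'] at heq
      have := Finj (j-s) (j'-s) (by omega) (by omega) (by omega)
      omega
  -- apply the layer colouring
  have hupath : IsPathSeq G (2*s) (fun j => v (idx j)) := by
    constructor
    · intro j hj; exact hadj_u j hj
    · intro j j' hj hj' heq
      exact idx_inj j j' hj hj' (hpath.2 _ _ (idx_lt j hj) (idx_lt j' hj') heq)
  obtain ⟨j, hjs, hdiff⟩ := hΦ M s hs0 (fun j => v (idx j))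
    (fun j hj => layerM j hj) hupath
  apply hdiff
  -- the colours agree
  have hFj := Fmem j hjs
  have hidxj : idx j = F j := idx_lo j hjs
  have hidxsj : idx (s+j) = t + F j := by
    rw [idx_hi (s+j) (by omega), show s+j-s = j by omega]
  have hcol := (hcomp (F j) hFj.1).2
  have hLj : L (v (F j)) = M := hFj.2
  have hLtj : L (v (t + F j)) = M := by
    rw [← hboring (F j) hFj.1]; exact hFj.2
  rw [hidxj, hidxsj]
  rw [hLj, hLtj] at hcol
  exact hcol

end AuxNonrepetitive

/-- If `G` has a shadow-complete layering each of whose layers induces a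
nonrepetitively `c`-colourable subgraph, then `π(G) ≤ 4c`. -/
theorem shadowComplete_pi {V : Type*} (G : SimpleGraph V) (L : V → ℕ)
    (hL : IsLayering G L) (hsc : ShadowComplete G L) (c : ℕ)
    (hlayers : ∀ i : ℕ, ∃ φ : V → Fin c, NonrepetitiveOn G {v : V | L v = i} φ) :
    ∃ φ : V → Fin (4 * c), NonrepetitiveColoring G φ := by
  exact shadowComplete_pi' G L hL hsc c hlayers
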